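/- arXiv:1001.3762 — 5 statements merged into one kernel-verified Lean document; each statement's English description precedes it below -/
import Mathlib

section
/- Let $f:[a,b]\to(c,d)$ be continuous and let $\varphi,\psi:(c,d)\to\mathbb{R}$ be continuous with $\varphi$ injective, $\psi$ strictly increasing, and $\psi\circ\varphi^{-1}$ convex on the image of $\varphi$. Then $\psi^{-1}\left(\frac{1}{b-a}\int_a^b \psi(f(t))\,dt\right) \geq \varphi^{-1}\left(\frac{1}{b-a}\int_a^b \varphi(f(t))\,dt\right)$. -/
open MeasureTheory Set

/-- Inverse of a continuous injective function on a compact set is continuous on the image. -/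
lemma aux_inv_continuousOn {K : Set ℝ} (hK : IsCompact K) {g ginv : ℝ → ℝ}
    (hg : ContinuousOn g K) (hinv : ∀ x ∈ K, ginv (g x) = x) :
    ContinuousOn ginv (g '' K) := by
  have : CompactSpace K := isCompact_iff_compactSpace.mp hK
  set F : K → ℝ := K.restrict g with hF
  have hFc : Continuous F := hg.restrict
  have hFi : Function.Injective F := by
    intro x y h
    have hx := hinv x x.2
    have hy := hinv y y.2
    apply Subtype.ext
    rw [← hx, ← hy]
    simp only [hF, Set.restrict_apply] at h
    exact congrArg ginv h
  let e : K ≃ Set.range F := Equiv.ofInjective F hFi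
  have hec : Continuous (e : K → Set.range F) := by
    apply Continuous.subtype_mk hFc
  let h : K ≃ₜ Set.range F := hec.homeoOfEquivCompactToT2
  have himg : g '' K = Set.range F := Set.image_eq_range g K
  rw [himg, continuousOn_iff_continuous_restrict]
  have heq : (Set.range F).restrict ginv = fun y => ((h.symm y : K) : ℝ) := by
    funext y
    have h1 : F (h.symm y) = (y : ℝ) := by
      have := h.apply_symm_apply y
      exact congrArg Subtype.val this
    have h2 : g ((h.symm y : K) : ℝ) = (y : ℝ) := h1
    show ginv (y : ℝ) = _
    rw [← h2, hinv _ (h.symm y).2]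
  rw [show (Set.range F).domRestrict ginv = _ from heq]
  exact continuous_subtype_val.comp h.symm.continuous

theorem quasi_arithmetic_mean_comparison
    (a b c d : ℝ) (hab : a < b) (f φ ψ φinv ψinv : ℝ → ℝ)
    (hf : ContinuousOn f (Set.Icc a b))
    (hmap : ∀ t ∈ Set.Icc a b, f t ∈ Set.Ioo c d)
    (hφ : ContinuousOn φ (Set.Ioo c d))
    (hψ : ContinuousOn ψ (Set.Ioo c d))
    (hφinj : Set.InjOn φ (Set.Ioo c d))
    (hφinv : ∀ x ∈ Set.Ioo c d, φinv (φ x) = x)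
    (hψmono : StrictMonoOn ψ (Set.Ioo c d))
    (hψinv : ∀ x ∈ Set.Ioo c d, ψinv (ψ x) = x)
    (hconv : ConvexOn ℝ (φ '' Set.Ioo c d) (ψ ∘ φinv)) :
    φinv ((∫ t in a..b, φ (f t)) / (b - a)) ≤
      ψinv ((∫ t in a..b, ψ (f t)) / (b - a)) := by
  -- the image of f is compact, take its min m and max M
  have hK : IsCompact (f '' Set.Icc a b) := isCompact_Icc.image_of_continuousOn hf
  have hKne : (f '' Set.Icc a b).Nonempty := (Set.nonempty_Icc.2 hab.le).image f
  set m := sInf (f '' Set.Icc a b) with hm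
  set M := sSup (f '' Set.Icc a b) with hM
  have hmK : m ∈ f '' Set.Icc a b := hK.sInf_mem hKne
  have hMK : M ∈ f '' Set.Icc a b := hK.sSup_mem hKne
  have hmIoo : m ∈ Set.Ioo c d := by obtain ⟨t, ht, h⟩ := hmK; exact h ▸ hmap t ht
  have hMIoo : M ∈ Set.Ioo c d := by obtain ⟨t, ht, h⟩ := hMK; exact h ▸ hmap t ht
  have hsub : Set.Icc m M ⊆ Set.Ioo c d := Set.Icc_subset_Ioo hmIoo.1 hMIoo.2
  have hfK : ∀ t ∈ Set.Icc a b, f t ∈ Set.Icc m M := fun t ht =>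
    ⟨csInf_le hK.bddBelow ⟨t, ht, rfl⟩, le_csSup hK.bddAbove ⟨t, ht, rfl⟩⟩
  have hmM : m ≤ M := (hfK _ (Set.left_mem_Icc.2 hab.le)).1.trans
    (hfK _ (Set.left_mem_Icc.2 hab.le)).2
  -- s = φ '' [m, M] is a compact interval
  set s : Set ℝ := φ '' Set.Icc m M with hs
  have hφc : ContinuousOn φ (Set.Icc m M) := hφ.mono hsub
  have hψc : ContinuousOn ψ (Set.Icc m M) := hψ.mono hsub
  have hsIcc : s = Set.Icc (sInf s) (sSup s) := hφc.image_Icc hmM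
  have hsconv : Convex ℝ s := hsIcc ▸ convex_Icc _ _
  have hsclosed : IsClosed s := hsIcc ▸ isClosed_Icc
  set s' : Set ℝ := ψ '' Set.Icc m M with hs'
  have hs'Icc : s' = Set.Icc (sInf s') (sSup s') := hψc.image_Icc hmM
  have hs'conv : Convex ℝ s' := hs'Icc ▸ convex_Icc _ _
  have hs'closed : IsClosed s' := hs'Icc ▸ isClosed_Icc
  -- measure facts
  have h0 : volume (Set.Icc a b) ≠ 0 := by
    rw [Real.volume_Icc]; simp [ENNReal.ofReal_eq_zero, not_le, sub_pos, hab]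
  have hvne : volume (Set.Icc a b) ≠ ⊤ := by rw [Real.volume_Icc]; exact ENNReal.ofReal_ne_top
  -- integrability
  have hφf : ContinuousOn (fun t => φ (f t)) (Set.Icc a b) :=
    hφ.comp hf fun t ht => hmap t ht
  have hψf : ContinuousOn (fun t => ψ (f t)) (Set.Icc a b) :=
    hψ.comp hf fun t ht => hmap t ht
  have hφfi : IntegrableOn (fun t => φ (f t)) (Set.Icc a b) volume :=
    hφf.integrableOn_Icc
  have hψfi : IntegrableOn (fun t => ψ (f t)) (Set.Icc a b) volume :=
    hψf.integrableOn_Icc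
  -- a.e. membership
  have haeφ : ∀ᵐ x ∂volume.restrict (Set.Icc a b), φ (f x) ∈ s :=
    (ae_restrict_iff' measurableSet_Icc).2 (ae_of_all _ fun t ht => ⟨f t, hfK t ht, rfl⟩)
  have haeψ : ∀ᵐ x ∂volume.restrict (Set.Icc a b), ψ (f x) ∈ s' :=
    (ae_restrict_iff' measurableSet_Icc).2 (ae_of_all _ fun t ht => ⟨f t, hfK t ht, rfl⟩)
  -- the averages belong to s, s'
  have hmemφ : (⨍ x in Set.Icc a b, φ (f x)) ∈ s :=
    hsconv.set_average_mem hsclosed h0 hvne haeφ hφfi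
  have hmemψ : (⨍ x in Set.Icc a b, ψ (f x)) ∈ s' :=
    hs'conv.set_average_mem hs'closed h0 hvne haeψ hψfi
  obtain ⟨x, hx, hφx⟩ := hmemφ
  obtain ⟨y, hy, hψy⟩ := hmemψ
  -- Jensen's inequality for ψ ∘ φinv on s
  have hφinvc : ContinuousOn φinv s :=
    aux_inv_continuousOn isCompact_Icc hφc fun z hz => hφinv z (hsub hz)
  have hmaps : Set.MapsTo φinv s (Set.Ioo c d) := by
    rintro z ⟨w, hw, rfl⟩
    rw [hφinv w (hsub hw)]
    exact hsub hw
  have hcont : ContinuousOn (ψ ∘ φinv) s := hψ.comp hφinvc hmaps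
  have hconv' : ConvexOn ℝ s (ψ ∘ φinv) :=
    hconv.subset (Set.image_mono hsub) hsconv
  have hgi : IntegrableOn ((ψ ∘ φinv) ∘ fun t => φ (f t)) (Set.Icc a b) volume := by
    apply hψfi.congr
    refine (ae_restrict_iff' measurableSet_Icc).2 (ae_of_all _ fun t ht => ?_)
    simp only [Function.comp_apply]
    rw [hφinv (f t) (hmap t ht)]
  have hJ := hconv'.map_set_average_le hcont hsclosed h0 hvne haeφ hφfi hgi
  have havg_eq : (⨍ x in Set.Icc a b, (ψ ∘ φinv) (φ (f x))) =
      ⨍ x in Set.Icc a b, ψ (f x) := by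
    apply average_congr
    refine (ae_restrict_iff' measurableSet_Icc).2 (ae_of_all _ fun t ht => ?_)
    simp only [Function.comp_apply]
    rw [hφinv (f t) (hmap t ht)]
  rw [havg_eq] at hJ
  -- from Jensen: ψ x ≤ ψ y, hence x ≤ y
  have hφinvavg : φinv (⨍ x in Set.Icc a b, φ (f x)) = x := by
    rw [← hφx, hφinv x (hsub hx)]
  rw [Function.comp_apply, hφinvavg, ← hψy] at hJ
  have hxy : x ≤ y := (hψmono.le_iff_le (hsub hx) (hsub hy)).1 hJ
  -- convert interval integrals to averages
  have hconv_avg : ∀ g : ℝ → ℝ, (∫ t in a..b, g t) / (b - a) = ⨍ x in Set.Icc a b, g x := by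
    intro g
    rw [intervalIntegral.integral_of_le hab.le, setAverage_eq, Real.volume_real_Icc_of_le hab.le,
      ← integral_Icc_eq_integral_Ioc,
      smul_eq_mul, div_eq_inv_mul]
  rw [hconv_avg (fun t => φ (f t)), hconv_avg (fun t => ψ (f t)), hφinvavg,
    ← hψy, hψinv y (hsub hy)]
  exact hxy
end

section
/- If $f:[a,b]\to\mathbb{R}$ is continuous and positive and $-1<\alpha<0$, then $\left(\int_a^b \frac{1}{f(t)}\,dt\right)^\alpha \int_a^b f(t)^\alpha\,dt \leq (b-a)^{1+\alpha}$, with equality if and only if $f$ is constant. -/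
open MeasureTheory Set

/-- If `f` is constant `k` on `[a,b]`, the expression equals `(b-a)^(1+α)`. -/
lemma const_case_eq (a b α : ℝ) (hab : a < b) (f : ℝ → ℝ)
    (hfpos : ∀ t ∈ Set.Icc a b, 0 < f t)
    (k : ℝ) (hk : ∀ t ∈ Set.Icc a b, f t = k) :
    (∫ t in a..b, 1 / f t) ^ α * (∫ t in a..b, (f t) ^ α) = (b - a) ^ (1 + α) := by
  have hk0 : 0 < k := (hk a (Set.left_mem_Icc.2 hab.le)) ▸ hfpos a (Set.left_mem_Icc.2 hab.le)
  have hT : (0:ℝ) < b - a := by linarith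
  have h1 : (∫ t in a..b, 1 / f t) = (b - a) * k⁻¹ := by
    rw [intervalIntegral.integral_congr (g := fun _ => k⁻¹) (fun t ht => by
      rw [Set.uIcc_of_le hab.le] at ht; rw [one_div, hk t ht]),
      intervalIntegral.integral_const, smul_eq_mul]
  have h2 : (∫ t in a..b, (f t) ^ α) = (b - a) * k ^ α := by
    rw [intervalIntegral.integral_congr (g := fun _ => k ^ α) (fun t ht => by
      rw [Set.uIcc_of_le hab.le] at ht; rw [hk t ht]),
      intervalIntegral.integral_const, smul_eq_mul]
  rw [h1, h2, Real.mul_rpow hT.le (by positivity), Real.inv_rpow hk0.le,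
    Real.rpow_add hT, Real.rpow_one]
  have hkα : (k:ℝ) ^ α ≠ 0 := by positivity
  field_simp

theorem reciprocal_power_inequality_concave_case
    (a b α : ℝ) (hab : a < b) (f : ℝ → ℝ)
    (hf : ContinuousOn f (Set.Icc a b))
    (hfpos : ∀ t ∈ Set.Icc a b, 0 < f t)
    (hα : -1 < α) (hα' : α < 0) :
    (∫ t in a..b, 1 / f t) ^ α * (∫ t in a..b, (f t) ^ α) ≤ (b - a) ^ (1 + α) ∧
    ((∫ t in a..b, 1 / f t) ^ α * (∫ t in a..b, (f t) ^ α) = (b - a) ^ (1 + α) ↔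
      ∃ k : ℝ, ∀ t ∈ Set.Icc a b, f t = k) := by
  set θ : ℝ := -α with hθdef
  have hθ0 : 0 < θ := by simp [hθdef]; linarith
  have hθ1 : θ < 1 := by simp [hθdef]; linarith
  have hT : (0:ℝ) < b - a := by linarith
  set μ : Measure ℝ := volume.restrict (Set.Icc a b) with hμdef
  haveI : IsFiniteMeasure μ := by
    constructor
    rw [hμdef, Measure.restrict_apply_univ, Real.volume_Icc]
    exact ENNReal.ofReal_lt_top
  have hμuniv : (μ Set.univ).toReal = b - a := by
    rw [hμdef, Measure.restrict_apply_univ, Real.volume_Icc, ENNReal.toReal_ofReal hT.le]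
  set u : ℝ → ℝ := fun t => (f t)⁻¹ with hudef
  have huc : ContinuousOn u (Set.Icc a b) := hf.inv₀ (fun t ht => (hfpos t ht).ne')
  have hgc : ContinuousOn (fun x : ℝ => x ^ θ) (Set.Ici 0) := fun x _ =>
    (Real.continuousAt_rpow_const x θ (Or.inr hθ0.le)).continuousWithinAt
  have hui : Integrable u μ := huc.integrableOn_Icc
  have hguc : ContinuousOn (fun t => (u t) ^ θ) (Set.Icc a b) :=
    huc.rpow_const (fun t ht => Or.inr hθ0.le)
  have hgi : Integrable ((fun x : ℝ => x ^ θ) ∘ u) μ := hguc.integrableOn_Icc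
  have hfs : ∀ᵐ x ∂μ, u x ∈ Set.Ici (0:ℝ) :=
    (ae_restrict_mem measurableSet_Icc).mono fun x hx =>
      le_of_lt (inv_pos.2 (hfpos x hx))
  -- translate the interval integrals
  set I : ℝ := ∫ t in a..b, 1 / f t with hIdef
  set J : ℝ := ∫ t in a..b, (f t) ^ α with hJdef
  have hIμ : I = ∫ x, u x ∂μ := by
    rw [hIdef, intervalIntegral.integral_of_le hab.le, hμdef,
      ← integral_Icc_eq_integral_Ioc]
    simp only [one_div, hudef]
  have hJμ : J = ∫ x, (u x) ^ θ ∂μ := by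
    rw [hJdef, intervalIntegral.integral_of_le hab.le, hμdef,
      ← integral_Icc_eq_integral_Ioc]
    refine setIntegral_congr_fun measurableSet_Icc (fun x hx => ?_)
    have h0 : 0 < f x := hfpos x hx
    rw [hudef]
    simp only
    rw [Real.inv_rpow h0.le, hθdef, Real.rpow_neg h0.le, inv_inv]
  have hI : 0 < I := by
    rw [hIdef]
    apply intervalIntegral.intervalIntegral_pos_of_pos_on
    · apply ContinuousOn.intervalIntegrable
      rw [Set.uIcc_of_le hab.le]
      exact hf.inv₀ (fun t ht => (hfpos t ht).ne') |>.congr (fun t ht => by simp [one_div])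
    · exact fun x hx => by
        have := hfpos x (Set.mem_Icc_of_Ioo hx); positivity
    · exact hab
  -- Jensen
  have key := (Real.strictConcaveOn_rpow hθ0 hθ1).ae_eq_const_or_lt_map_average hgc
    isClosed_Ici hfs hui hgi
  have havg : (⨍ x, u x ∂μ) = I / (b - a) := by
    rw [average_eq, smul_eq_mul, measureReal_def, hμuniv, ← hIμ, div_eq_inv_mul]
  have havg2 : (⨍ x, (u x) ^ θ ∂μ) = J / (b - a) := by
    rw [average_eq, smul_eq_mul, measureReal_def, hμuniv, ← hJμ, div_eq_inv_mul]
  have hconst : (∃ k : ℝ, ∀ t ∈ Set.Icc a b, f t = k) →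
      I ^ α * J = (b - a) ^ (1 + α) := by
    rintro ⟨k, hk⟩
    exact const_case_eq a b α hab f hfpos k hk
  rcases key with heq | hlt
  · -- f is constant on Icc
    have hEq : Set.EqOn u (Function.const ℝ (⨍ x, u x ∂μ)) (Set.Icc a b) :=
      Measure.eqOn_of_ae_eq heq huc continuousOn_const
        (by rw [interior_Icc, closure_Ioo hab.ne])
    have hkex : ∃ k : ℝ, ∀ t ∈ Set.Icc a b, f t = k := by
      refine ⟨(⨍ x, u x ∂μ)⁻¹, fun t ht => ?_⟩
      have h1 := hEq ht
      have h2 : u t = (⨍ x, u x ∂μ) := h1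
      rw [← h2]
      show f t = ((f t)⁻¹)⁻¹
      rw [inv_inv]
    have := hconst hkex
    exact ⟨le_of_eq this, ⟨fun _ => hkex, fun _ => this⟩⟩
  · -- strict inequality
    rw [havg, havg2] at hlt
    -- J / (b-a) < (I/(b-a))^θ
    have h1 : J < (b - a) * (I / (b - a)) ^ θ := by
      rw [mul_comm]
      exact (div_lt_iff₀ hT).1 hlt
    have h2 : (b - a) * (I / (b - a)) ^ θ = (b - a) ^ (1 + α) * I ^ θ := by
      rw [Real.div_rpow hI.le hT.le, hθdef, Real.rpow_add hT, Real.rpow_one]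
      rw [Real.rpow_neg hT.le]
      field_simp
    have hstrict : I ^ α * J < (b - a) ^ (1 + α) := by
      have h3 : I ^ α * J < I ^ α * ((b - a) ^ (1 + α) * I ^ θ) := by
        apply mul_lt_mul_of_pos_left _ (Real.rpow_pos_of_pos hI α)
        rw [← h2]; exact h1
      have h4 : I ^ α * ((b - a) ^ (1 + α) * I ^ θ) = (b - a) ^ (1 + α) := by
        rw [hθdef, mul_comm ((b-a) ^ (1+α)), ← mul_assoc, ← Real.rpow_add hI]
        simp
      linarith [h3, h4.symm.le]
    refine ⟨hstrict.le, ⟨fun h => absurd h (ne_of_lt hstrict), fun hk => ?_⟩⟩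
    exact absurd (hconst hk) (ne_of_lt hstrict)
end

section
/- Let $\varphi:[a,b]\to\mathbb{R}$ be positive and continuous, $B\in\mathbb{R}$, and set $C=\frac{1}{b-a}\left(\int_a^b \ln\varphi(t)\,dt + B\right)$. Then for every $C^1$ function $y:[a,b]\to\mathbb{R}$ with $y(a)=0$ and $y(b)=B$, one has $\int_a^b \varphi(t)\,e^{y'(t)}\,dt \geq (b-a)e^{C}$, and equality holds for $y(t)=-\int_a^t \ln\varphi(s)\,ds + C(t-a)$. -/
theorem variational_exp_problem
    (a b B : ℝ) (hab : a < b) (φ : ℝ → ℝ)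
    (hφc : ContinuousOn φ (Set.Icc a b))
    (hφpos : ∀ t ∈ Set.Icc a b, 0 < φ t)
    (C : ℝ) (hC : C = ((∫ t in a..b, Real.log (φ t)) + B) / (b - a)) :
    (∀ y y' : ℝ → ℝ, (∀ t ∈ Set.Icc a b, HasDerivAt y (y' t) t) →
      ContinuousOn y' (Set.Icc a b) → y a = 0 → y b = B →
      (b - a) * Real.exp C ≤ ∫ t in a..b, φ t * Real.exp (y' t)) ∧
    (∫ t in a..b, φ t * Real.exp (-(Real.log (φ t)) + C)) = (b - a) * Real.exp C ∧
    (fun t : ℝ => -(∫ s in a..t, Real.log (φ s)) + C * (t - a)) a = 0 ∧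
    (fun t : ℝ => -(∫ s in a..t, Real.log (φ s)) + C * (t - a)) b = B := by
  have hba : b - a ≠ 0 := sub_ne_zero.mpr hab.ne'
  have hIcc : Set.uIcc a b = Set.Icc a b := Set.uIcc_of_le hab.le
  have hlogc : ContinuousOn (fun t => Real.log (φ t)) (Set.Icc a b) :=
    hφc.log (fun t ht => (hφpos t ht).ne')
  have hCeq : C * (b - a) = (∫ t in a..b, Real.log (φ t)) + B := by
    rw [hC]; field_simp
  refine ⟨?_, ?_, ?_, ?_⟩
  · intro y y' hderiv hy'c ha hb
    have hInt2 : IntervalIntegrable (fun t => φ t * Real.exp (y' t)) MeasureTheory.volume a b := by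
      apply ContinuousOn.intervalIntegrable
      rw [hIcc]
      exact hφc.mul (Real.continuous_exp.comp_continuousOn hy'c)
    have hIntlog : IntervalIntegrable (fun t => Real.log (φ t)) MeasureTheory.volume a b :=
      ContinuousOn.intervalIntegrable (by rw [hIcc]; exact hlogc)
    have hInty' : IntervalIntegrable y' MeasureTheory.volume a b :=
      ContinuousOn.intervalIntegrable (by rw [hIcc]; exact hy'c)
    have hIy' : (∫ t in a..b, y' t) = B := by
      rw [intervalIntegral.integral_eq_sub_of_hasDerivAt
        (fun t ht => hderiv t (by rwa [hIcc] at ht)) hInty', ha, hb, sub_zero]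
    have hInt1 : IntervalIntegrable
        (fun t => Real.exp C * (1 + Real.log (φ t) + y' t - C)) MeasureTheory.volume a b := by
      exact ((((intervalIntegrable_const (c := (1:ℝ))).add hIntlog).add hInty').sub
        (intervalIntegrable_const (c := C))).const_mul _
    have hpt : ∀ t ∈ Set.Icc a b,
        Real.exp C * (1 + Real.log (φ t) + y' t - C) ≤ φ t * Real.exp (y' t) := by
      intro t ht
      have hφt := hφpos t ht
      have h1 : φ t * Real.exp (y' t) = Real.exp (Real.log (φ t) + y' t) := by
        rw [Real.exp_add, Real.exp_log hφt]
      rw [h1]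
      have h2 : Real.exp C * Real.exp (Real.log (φ t) + y' t - C)
          = Real.exp (Real.log (φ t) + y' t) := by
        rw [← Real.exp_add]; ring_nf
      calc Real.exp C * (1 + Real.log (φ t) + y' t - C)
          ≤ Real.exp C * Real.exp (Real.log (φ t) + y' t - C) := by
            apply mul_le_mul_of_nonneg_left _ (Real.exp_pos C).le
            linarith [Real.add_one_le_exp (Real.log (φ t) + y' t - C)]
        _ = _ := h2
    have hmono := intervalIntegral.integral_mono_on hab.le hInt1 hInt2 hpt
    refine le_trans ?_ hmono
    rw [intervalIntegral.integral_const_mul]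
    have hsum : (∫ t in a..b, (1 + Real.log (φ t) + y' t - C)) = b - a := by
      rw [intervalIntegral.integral_sub
          (((intervalIntegrable_const (c := (1:ℝ))).add hIntlog).add hInty')
          (intervalIntegrable_const (c := C)),
        intervalIntegral.integral_add
          ((intervalIntegrable_const (c := (1:ℝ))).add hIntlog) hInty',
        intervalIntegral.integral_add (intervalIntegrable_const (c := (1:ℝ))) hIntlog,
        hIy', intervalIntegral.integral_const, intervalIntegral.integral_const,
        smul_eq_mul, smul_eq_mul]
      linarith [hCeq]
    rw [hsum]; ring_nf; rfl
  · have hcongr : ∀ t ∈ Set.uIcc a b,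
        φ t * Real.exp (-(Real.log (φ t)) + C) = Real.exp C := by
      intro t ht
      rw [hIcc] at ht
      have hφt := hφpos t ht
      rw [Real.exp_add, Real.exp_neg, Real.exp_log hφt]
      field_simp
    rw [intervalIntegral.integral_congr hcongr, intervalIntegral.integral_const,
      smul_eq_mul]
  · simp
  · simp only
    have : (∫ s in a..b, Real.log (φ s)) = C * (b - a) - B := by linarith [hCeq]
    rw [this]; ring
end

section
/- Let $\varphi:\mathbb{R}\to\mathbb{R}$ be positive and continuous, $G(x)=\int_0^x\varphi(s)\,ds$, $B>0$, $C=G(B)/(b-a)$, and $\alpha<0$ or $\alpha>1$. Then for every $C^1$ function $y:[a,b]\to\mathbb{R}$ with $y'>0$, $y(a)=0$, and $y(b)=B$, one has $\int_a^b \left(\varphi(y(t))\,y'(t)\right)^\alpha\,dt \geq (b-a)C^\alpha$, and equality holds for $y(t)=G^{-1}(C(t-a))$. -/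
open Set MeasureTheory intervalIntegral

lemma convexOn_rpow_aux' {α ε : ℝ} (hα : α < 0 ∨ 1 < α) (hε : 0 < ε) :
    ConvexOn ℝ (Set.Ici ε) (fun x : ℝ => x ^ α) := by
  have hne : ∀ x : ℝ, x ∈ Set.Ici ε → x ≠ 0 := fun x hx => by
    have : (0:ℝ) < x := lt_of_lt_of_le hε hx; exact this.ne'
  have hderiv : Set.EqOn (deriv fun x : ℝ => x ^ α) (fun x => α * x ^ (α - 1)) (Set.Ioi ε) := by
    intro x hx
    exact Real.deriv_rpow_const x α
  apply convexOn_of_deriv2_nonneg (convex_Ici ε)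
  · intro x hx
    exact (Real.continuousAt_rpow_const x α (Or.inl (hne x hx))).continuousWithinAt
  · rw [interior_Ici]
    intro x hx
    exact (Real.hasDerivAt_rpow_const (p := α)
      (Or.inl (lt_trans hε hx).ne')).differentiableAt.differentiableWithinAt
  · rw [interior_Ici]
    refine DifferentiableOn.congr ?_ hderiv
    intro x hx
    have : HasDerivAt (fun x : ℝ => α * x ^ (α - 1)) (α * ((α - 1) * x ^ (α - 1 - 1))) x :=
      (Real.hasDerivAt_rpow_const (p := α - 1) (Or.inl (lt_trans hε hx).ne')).const_mul α
    exact this.differentiableAt.differentiableWithinAt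
  · rw [interior_Ici]
    intro x hx
    have hx0 : (0:ℝ) < x := lt_trans hε hx
    have h2 : deriv^[2] (fun x : ℝ => x ^ α) x = α * ((α - 1) * x ^ (α - 1 - 1)) := by
      have hEq : deriv (deriv fun x : ℝ => x ^ α) x
          = deriv (fun x : ℝ => α * x ^ (α - 1)) x := by
        apply Filter.EventuallyEq.deriv_eq
        exact Filter.eventuallyEq_of_mem (Ioi_mem_nhds hx) hderiv
      have : HasDerivAt (fun x : ℝ => α * x ^ (α - 1)) (α * ((α - 1) * x ^ (α - 1 - 1))) x :=
        (Real.hasDerivAt_rpow_const (p := α - 1) (Or.inl hx0.ne')).const_mul α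
      simp [Function.iterate_succ, hEq, this.deriv]
    rw [h2]
    have hpow : (0:ℝ) < x ^ (α - 1 - 1) := Real.rpow_pos_of_pos hx0 _
    have hαα : 0 ≤ α * (α - 1) := by
      rcases hα with h | h
      · exact le_of_lt (mul_pos_of_neg_of_neg h (by linarith))
      · exact le_of_lt (mul_pos (by linarith) (by linarith))
    calc (0:ℝ) ≤ α * (α - 1) * x ^ (α - 1 - 1) := mul_nonneg hαα hpow.le
      _ = α * ((α - 1) * x ^ (α - 1 - 1)) := by ring

theorem variational_power_problem_min
    (a b B α : ℝ) (hab : a < b) (hB : 0 < B)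
    (hα : α < 0 ∨ 1 < α)
    (φ : ℝ → ℝ) (hφc : Continuous φ) (hφpos : ∀ x, 0 < φ x)
    (G Ginv : ℝ → ℝ) (hG : ∀ x, G x = ∫ s in (0:ℝ)..x, φ s)
    (hGinv : ∀ x, Ginv (G x) = x)
    (C : ℝ) (hC : C = G B / (b - a)) :
    (∀ y y' : ℝ → ℝ, (∀ t ∈ Set.Icc a b, HasDerivAt y (y' t) t) →
      ContinuousOn y' (Set.Icc a b) → (∀ t ∈ Set.Icc a b, 0 < y' t) →
      y a = 0 → y b = B →
      (b - a) * C ^ α ≤ ∫ t in a..b, (φ (y t) * y' t) ^ α) ∧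
    (∫ t in a..b,
        (φ (Ginv (C * (t - a))) * deriv (fun s : ℝ => Ginv (C * (s - a))) t) ^ α) =
      (b - a) * C ^ α := by
  have hba : (0:ℝ) < b - a := by linarith
  -- basic facts about G
  have hGd : ∀ x, HasDerivAt G (φ x) x := by
    intro x
    have hfun : G = fun u => ∫ s in (0:ℝ)..u, φ s := funext hG
    rw [hfun]
    exact intervalIntegral.integral_hasDerivAt_right (hφc.intervalIntegrable 0 x)
      hφc.aestronglyMeasurable.stronglyMeasurableAtFilter hφc.continuousAt
  have hGc : Continuous G := continuous_iff_continuousAt.2 fun x => (hGd x).continuousAt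
  have hGmono : StrictMono G := by
    intro x y hxy
    have h1 : G y - G x = ∫ s in x..y, φ s := by
      rw [hG, hG, ← intervalIntegral.integral_add_adjacent_intervals
        (hφc.intervalIntegrable 0 x) (hφc.intervalIntegrable x y)]
      ring
    have h2 : 0 < ∫ s in x..y, φ s :=
      intervalIntegral.intervalIntegral_pos_of_pos (hφc.intervalIntegrable x y) hφpos hxy
    linarith
  have hG0 : G 0 = 0 := by simp [hG]
  have hGB : 0 < G B := by rw [← hG0]; exact hGmono hB
  have hC0 : 0 < C := by rw [hC]; positivity
  have hCb : C * (b - a) = G B := by rw [hC]; field_simp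
  -- derivative of Ginv
  have hGinvd : ∀ x, HasDerivAt Ginv (φ x)⁻¹ (G x) := by
    intro x
    have hcont : ContinuousAt Ginv (G x) := by
      have : Filter.Tendsto Ginv (nhds (G x)) (nhds x) := by
        refine tendsto_order.2 ⟨?_, ?_⟩
        · intro c hc
          set c' := max c (x - 1) with hc'
          have hc'x : c' < x := max_lt hc (by linarith)
          have hmem : Set.Ioo (G c') (G (x+1)) ∈ nhds (G x) :=
            Ioo_mem_nhds (hGmono hc'x) (hGmono (by linarith))
          refine Filter.eventually_of_mem hmem fun z hz => ?_
          obtain ⟨w, hw, rfl⟩ := intermediate_value_Ioo (by linarith : c' ≤ x + 1)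
            hGc.continuousOn hz
          rw [hGinv]
          exact lt_of_le_of_lt (le_max_left _ _) hw.1
        · intro c hc
          set c' := min c (x + 1) with hc'
          have hc'x : x < c' := lt_min hc (by linarith)
          have hmem : Set.Ioo (G (x-1)) (G c') ∈ nhds (G x) :=
            Ioo_mem_nhds (hGmono (by linarith)) (hGmono hc'x)
          refine Filter.eventually_of_mem hmem fun z hz => ?_
          obtain ⟨w, hw, rfl⟩ := intermediate_value_Ioo (by linarith : x - 1 ≤ c')
            hGc.continuousOn hz
          rw [hGinv]
          exact lt_of_lt_of_le hw.2 (min_le_left _ _)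
      rw [ContinuousAt, hGinv]
      exact this
    have hev : ∀ᶠ z in nhds (G x), G (Ginv z) = z := by
      have hmem : Set.Ioo (G (x-1)) (G (x+1)) ∈ nhds (G x) :=
        Ioo_mem_nhds (hGmono (by linarith)) (hGmono (by linarith))
      refine Filter.eventually_of_mem hmem fun z hz => ?_
      obtain ⟨w, hw, rfl⟩ := intermediate_value_Ioo (by linarith : x - 1 ≤ x + 1)
        hGc.continuousOn hz
      rw [hGinv]
    have hGx : HasDerivAt G (φ x) (Ginv (G x)) := by rw [hGinv]; exact hGd x
    exact HasDerivAt.of_local_left_inverse hcont hGx (hφpos x).ne' hev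
  constructor
  · -- inequality part
    intro y y' hy hy'c hy'pos hya hyb
    have hyc : ContinuousOn y (Icc a b) :=
      fun t ht => (hy t ht).continuousAt.continuousWithinAt
    set f : ℝ → ℝ := fun t => φ (y t) * y' t with hf
    have hfc : ContinuousOn f (Icc a b) := (hφc.comp_continuousOn hyc).mul hy'c
    have hfpos : ∀ t ∈ Icc a b, 0 < f t := fun t ht => mul_pos (hφpos _) (hy'pos t ht)
    have hint : ∫ t in a..b, f t = G B := by
      have hGy : ∀ t ∈ uIcc a b, HasDerivAt (fun u => G (y u)) (f t) t := by
        rw [uIcc_of_le hab.le]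
        intro t ht
        exact (hGd (y t)).comp t (hy t ht)
      have hii : IntervalIntegrable f volume a b := by
        apply ContinuousOn.intervalIntegrable
        rwa [uIcc_of_le hab.le]
      rw [intervalIntegral.integral_eq_sub_of_hasDerivAt hGy hii, hya, hyb, hG0, sub_zero]
    obtain ⟨t0, ht0, hmin⟩ := isCompact_Icc.exists_isMinOn (nonempty_Icc.2 hab.le) hfc
    set ε := f t0 with hε
    have hεpos : 0 < ε := hfpos t0 ht0
    set μ := volume.restrict (Icc a b) with hμ
    have hμuniv : μ Set.univ = ENNReal.ofReal (b - a) := by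
      rw [hμ, Measure.restrict_apply_univ, Real.volume_Icc]
    haveI : IsFiniteMeasure μ := ⟨by rw [hμuniv]; exact ENNReal.ofReal_lt_top⟩
    haveI : NeZero μ := ⟨by
      intro h
      rw [h] at hμuniv
      simp only [Measure.coe_zero, Pi.zero_apply] at hμuniv
      rw [eq_comm, ENNReal.ofReal_eq_zero] at hμuniv
      linarith⟩
    have hintμ : ∫ x, f x ∂μ = G B := by
      rw [hμ, MeasureTheory.integral_Icc_eq_integral_Ioc,
        ← intervalIntegral.integral_of_le hab.le]
      exact hint
    have havg : ⨍ x, f x ∂μ = C := by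
      rw [average_eq, measureReal_def, hμuniv, ENNReal.toReal_ofReal hba.le, hintμ, smul_eq_mul, hC]
      field_simp
    have hfmem : ∀ᵐ x ∂μ, f x ∈ Set.Ici ε := by
      rw [hμ]
      exact (ae_restrict_iff' measurableSet_Icc).2
        (Filter.Eventually.of_forall fun x hx => hmin hx)
    have hfi : MeasureTheory.Integrable f μ := hfc.integrableOn_Icc
    have hgc : ContinuousOn (fun x : ℝ => x ^ α) (Set.Ici ε) := fun x hx =>
      (Real.continuousAt_rpow_const x α
        (Or.inl (lt_of_lt_of_le hεpos hx).ne')).continuousWithinAt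
    have hgi : MeasureTheory.Integrable ((fun x : ℝ => x ^ α) ∘ f) μ := by
      apply ContinuousOn.integrableOn_Icc
      exact hfc.rpow_const fun x hx => Or.inl (hfpos x hx).ne'
    have jensen := (convexOn_rpow_aux' hα hεpos).map_average_le hgc isClosed_Ici
      hfmem hfi hgi
    rw [havg] at jensen
    have havg2 : ⨍ x, f x ^ α ∂μ = (b - a)⁻¹ * ∫ t in a..b, f t ^ α := by
      rw [average_eq, measureReal_def, hμuniv, ENNReal.toReal_ofReal hba.le, smul_eq_mul,
        intervalIntegral.integral_of_le hab.le, hμ,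
        ← MeasureTheory.integral_Icc_eq_integral_Ioc]
    rw [havg2] at jensen
    calc (b - a) * C ^ α ≤ (b - a) * ((b - a)⁻¹ * ∫ t in a..b, f t ^ α) := by
          exact mul_le_mul_of_nonneg_left jensen hba.le
      _ = ∫ t in a..b, f t ^ α := by field_simp
  · -- equality part
    have key : Set.EqOn
        (fun t => (φ (Ginv (C * (t - a))) * deriv (fun s : ℝ => Ginv (C * (s - a))) t) ^ α)
        (fun _ => C ^ α) (Set.uIcc a b) := by
      rw [uIcc_of_le hab.le]
      intro t ht
      have h1 : C * (t - a) ∈ Set.Icc (G 0) (G B) := by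
        rw [hG0]
        constructor
        · have : 0 ≤ t - a := by linarith [ht.1]
          positivity
        · rw [← hCb]
          have : t - a ≤ b - a := by linarith [ht.2]
          nlinarith
      obtain ⟨x, _, hx⟩ := intermediate_value_Icc hB.le hGc.continuousOn h1
      have hinner : HasDerivAt (fun s : ℝ => C * (s - a)) C t := by
        simpa using ((hasDerivAt_id t).sub_const a).const_mul C
      have houter : HasDerivAt Ginv (φ x)⁻¹ (C * (t - a)) := by
        rw [← hx]; exact hGinvd x
      have hcomp : HasDerivAt (fun s : ℝ => Ginv (C * (s - a))) ((φ x)⁻¹ * C) t :=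
        HasDerivAt.comp t houter hinner
      have hval : Ginv (C * (t - a)) = x := by rw [← hx, hGinv]
      simp only [hcomp.deriv, hval]
      rw [show φ x * ((φ x)⁻¹ * C) = C by rw [← mul_assoc, mul_inv_cancel₀ (hφpos x).ne', one_mul]]
    rw [intervalIntegral.integral_congr key, intervalIntegral.integral_const, smul_eq_mul]
end

section
/- Let $\varphi:\mathbb{R}\to\mathbb{R}$ be positive and continuous, $G(x)=\int_0^x\varphi(s)\,ds$, $B>0$, $C=G(B)/(b-a)$, and $0<\alpha<1$. Then for every $C^1$ function $y:[a,b]\to\mathbb{R}$ with $y'>0$, $y(a)=0$, and $y(b)=B$, one has $\int_a^b \left(\varphi(y(t))\,y'(t)\right)^\alpha\,dt \leq (b-a)C^\alpha$, and equality holds for $y(t)=G^{-1}(C(t-a))$. -/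
open Set MeasureTheory

theorem variational_power_problem_max
    (a b B α : ℝ) (hab : a < b) (hB : 0 < B)
    (hα0 : 0 < α) (hα1 : α < 1)
    (φ : ℝ → ℝ) (hφc : Continuous φ) (hφpos : ∀ x, 0 < φ x)
    (G Ginv : ℝ → ℝ) (hG : ∀ x, G x = ∫ s in (0:ℝ)..x, φ s)
    (hGinv : ∀ x, Ginv (G x) = x)
    (C : ℝ) (hC : C = G B / (b - a)) :
    (∀ y y' : ℝ → ℝ, (∀ t ∈ Set.Icc a b, HasDerivAt y (y' t) t) →
      ContinuousOn y' (Set.Icc a b) → (∀ t ∈ Set.Icc a b, 0 < y' t) →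
      y a = 0 → y b = B →
      (∫ t in a..b, (φ (y t) * y' t) ^ α) ≤ (b - a) * C ^ α) ∧
    (∫ t in a..b,
        (φ (Ginv (C * (t - a))) * deriv (fun s : ℝ => Ginv (C * (s - a))) t) ^ α) =
      (b - a) * C ^ α := by
  have hba : (0:ℝ) < b - a := sub_pos.2 hab
  have hGd : ∀ x, HasDerivAt G (φ x) x := by
    intro x
    have h := (hφc.integral_hasStrictDerivAt 0 x).hasDerivAt
    exact h.congr_of_eventuallyEq (Filter.Eventually.of_forall fun y => hG y)
  have hGmono : StrictMono G := by
    apply strictMono_of_deriv_pos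
    intro x
    rw [(hGd x).deriv]
    exact hφpos x
  have hGcont : Continuous G := continuous_iff_continuousAt.2 fun x => (hGd x).continuousAt
  have hG0 : G 0 = 0 := by rw [hG]; simp
  have hGB : 0 < G B := by rw [← hG0]; exact hGmono hB
  have hCpos : 0 < C := by rw [hC]; exact div_pos hGB hba
  have hCb : C * (b - a) = G B := by rw [hC]; field_simp
  constructor
  · intro y y' hy hy'c hy'pos hya hyb
    set F : ℝ → ℝ := fun t => φ (y t) * y' t with hF
    have hycont : ContinuousOn y (Icc a b) := fun t ht =>
      (hy t ht).continuousAt.continuousWithinAt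
    have hFcont : ContinuousOn F (Icc a b) := (hφc.comp_continuousOn hycont).mul hy'c
    have huIcc : uIcc a b = Icc a b := uIcc_of_le hab.le
    have hFcu : ContinuousOn F (uIcc a b) := by rw [huIcc]; exact hFcont
    have hint : ∫ t in a..b, F t = G B := by
      have h := intervalIntegral.integral_eq_sub_of_hasDerivAt
        (f := fun t => G (y t)) (f' := F)
        (fun t ht => by
          rw [huIcc] at ht
          exact (hGd (y t)).comp t (hy t ht))
        hFcu.intervalIntegrable
      rw [h]
      show G (y b) - G (y a) = G B
      rw [hya, hyb, hG0, sub_zero]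
    have hμ1 : volume (Ioc a b) ≠ 0 := by
      rw [Real.volume_Ioc]
      simp [ENNReal.ofReal_eq_zero, not_le, hab]
    have hμ2 : volume (Ioc a b) ≠ ⊤ := (measure_Ioc_lt_top).ne
    have hFI : IntegrableOn F (Ioc a b) :=
      (hFcont.integrableOn_Icc).mono_set Ioc_subset_Icc_self
    have hgFI : IntegrableOn ((fun x : ℝ => x ^ α) ∘ F) (Ioc a b) := by
      have : ContinuousOn (fun t => F t ^ α) (Icc a b) :=
        hFcont.rpow_const (fun t ht => Or.inr hα0.le)
      exact (this.integrableOn_Icc).mono_set Ioc_subset_Icc_self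
    have hfs : ∀ᵐ x ∂(volume.restrict (Ioc a b)), F x ∈ Ici (0:ℝ) := by
      rw [ae_restrict_iff' measurableSet_Ioc]
      exact MeasureTheory.ae_of_all _ fun x hx =>
        le_of_lt (mul_pos (hφpos _) (hy'pos x (Ioc_subset_Icc_self hx)))
    have hconc : ConcaveOn ℝ (Ici 0) (fun x : ℝ => x ^ α) :=
      (Real.strictConcaveOn_rpow hα0 hα1).concaveOn
    have hcont : ContinuousOn (fun x : ℝ => x ^ α) (Ici 0) :=
      continuousOn_id.rpow_const fun x hx => Or.inr hα0.le
    have hjensen := hconc.le_map_set_average hcont isClosed_Ici hμ1 hμ2 hfs hFI hgFI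
    have hIoc : ∫ t in Ioc a b, F t = G B := by
      rw [← intervalIntegral.integral_of_le hab.le]; exact hint
    have hCave : (b - a)⁻¹ * G B = C := by rw [hC]; field_simp
    rw [setAverage_eq, setAverage_eq, Real.volume_real_Ioc_of_le hab.le,
      smul_eq_mul, smul_eq_mul, hIoc, hCave] at hjensen
    have hgoal : ∫ t in Ioc a b, F t ^ α ≤ (b - a) * C ^ α := by
      have h2 := mul_le_mul_of_nonneg_left hjensen hba.le
      rwa [← mul_assoc, mul_inv_cancel₀ hba.ne', one_mul] at h2
    rw [intervalIntegral.integral_of_le hab.le]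
    exact hgoal
  · have hinv : ∀ x : ℝ, HasDerivAt Ginv (φ x)⁻¹ (G x) := by
      intro x
      have hsub : Ioo (G (x - 1)) (G (x + 1)) ⊆ G '' Ioo (x - 1) (x + 1) :=
        intermediate_value_Ioo (by linarith) hGcont.continuousOn
      have hmemx : G x ∈ Ioo (G (x - 1)) (G (x + 1)) :=
        ⟨hGmono (by linarith), hGmono (by linarith)⟩
      have hnbhd : G '' Ioo (x - 1) (x + 1) ∈ nhds (G x) :=
        Filter.mem_of_superset (Ioo_mem_nhds hmemx.1 hmemx.2) hsub
      have hfg : ∀ᶠ z in nhds (G x), G (Ginv z) = z := by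
        filter_upwards [hnbhd] with z hz
        obtain ⟨w, _, rfl⟩ := hz
        rw [hGinv]
      have hmonoinv : StrictMonoOn Ginv (G '' Ioo (x - 1) (x + 1)) := by
        rintro z1 ⟨w1, _, rfl⟩ z2 ⟨w2, _, rfl⟩ h12
        rw [hGinv, hGinv]
        exact hGmono.lt_iff_lt.mp h12
      have himg : Ginv '' (G '' Ioo (x - 1) (x + 1)) = Ioo (x - 1) (x + 1) := by
        rw [Set.image_image]
        simp only [hGinv, Set.image_id']
      have hcontinv : ContinuousAt Ginv (G x) := by
        apply hmonoinv.continuousAt_of_image_mem_nhds hnbhd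
        rw [himg, hGinv]
        exact Ioo_mem_nhds (by linarith) (by linarith)
      have hf : HasDerivAt G (φ x) (Ginv (G x)) := by rw [hGinv]; exact hGd x
      exact HasDerivAt.of_local_left_inverse hcontinv hf (hφpos x).ne' hfg
    have key : ∀ t ∈ Ioo a b,
        (φ (Ginv (C * (t - a))) * deriv (fun s : ℝ => Ginv (C * (s - a))) t) ^ α
          = C ^ α := by
      intro t ht
      have hz : C * (t - a) ∈ Ioo (G 0) (G B) := by
        rw [hG0]
        constructor
        · nlinarith [ht.1]
        · nlinarith [ht.2, hCb]
      obtain ⟨x, hx, hGx⟩ := intermediate_value_Ioo hB.le hGcont.continuousOn hz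
      have h1 : HasDerivAt (fun s : ℝ => C * (s - a)) C t := by
        simpa using ((hasDerivAt_id t).sub_const a).const_mul C
      have h2 : HasDerivAt Ginv (φ x)⁻¹ (C * (t - a)) := by
        rw [← hGx]; exact hinv x
      have hd : HasDerivAt (fun s : ℝ => Ginv (C * (s - a))) ((φ x)⁻¹ * C) t :=
        h2.comp t h1
      rw [hd.deriv, ← hGx, hGinv, mul_inv_cancel_left₀ (hφpos x).ne']
    rw [intervalIntegral.integral_of_le hab.le, MeasureTheory.integral_Ioc_eq_integral_Ioo,
      MeasureTheory.setIntegral_congr_fun measurableSet_Ioo key,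
      MeasureTheory.setIntegral_const, Real.volume_real_Ioo_of_le hab.le,
      smul_eq_mul]
end
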